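/- Let A₁, A₂, B₁, B₂ be sub-σ-algebras of F such that the σ-algebra A₁ ∨ B₁ is independent of A₂ ∨ B₂, and additionally A₂ is independent of B₂. Then α(A₁ ∨ A₂, B₁ ∨ B₂) = α(A₁, B₁). -/

import Mathlib

open MeasureTheory ProbabilityTheory Filter Real
open scoped ENNReal

noncomputable section

/-- The α-measure of dependence between two sub-σ-algebras:
`α(G, H) = sup{|P(G ∩ H) − P(G)P(H)| : G ∈ G, H ∈ H}`. -/
def alphaDep {Ω : Type*} {mΩ : MeasurableSpace Ω} (P : Measure Ω)
    (G H : MeasurableSpace Ω) : ℝ :=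
  sSup {x : ℝ | ∃ A B : Set Ω, MeasurableSet[G] A ∧ MeasurableSet[H] B ∧
    x = |(P (A ∩ B)).toReal - (P A).toReal * (P B).toReal|}

namespace Stmt12Aux

open Set
open scoped symmDiff

set_option linter.unusedSectionVars false

variable {Ω : Type*} (G H M₁ M₂ : MeasurableSpace Ω) {mΩ : MeasurableSpace Ω}
  (P : Measure Ω) [IsProbabilityMeasure P]

def alphaSet : Set ℝ :=
  {x : ℝ | ∃ A B : Set Ω, MeasurableSet[G] A ∧ MeasurableSet[H] B ∧
    x = |(P (A ∩ B)).toReal - (P A).toReal * (P B).toReal|}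

lemma toReal_le_one (s : Set Ω) : (P s).toReal ≤ 1 := by
  have := prob_le_one (μ := P) (s := s)
  simpa using ENNReal.toReal_mono (by simp) this

variable {G H P}

lemma alphaSet_le_one {x : ℝ} (hx : x ∈ alphaSet G H P) : x ≤ 1 := by
  obtain ⟨A, B, -, -, rfl⟩ := hx
  rw [abs_sub_le_iff]
  refine ⟨?_, ?_⟩ <;>
  · have h1 := toReal_le_one P A
    have h2 := toReal_le_one P B
    have h3 := toReal_le_one P (A ∩ B)
    nlinarith [ENNReal.toReal_nonneg (a := P A), ENNReal.toReal_nonneg (a := P B),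
      ENNReal.toReal_nonneg (a := P (A ∩ B))]

variable (G H P)

lemma bddAbove_alphaSet : BddAbove (alphaSet G H P) :=
  ⟨1, fun _ hx => alphaSet_le_one hx⟩

lemma zero_mem_alphaSet : (0 : ℝ) ∈ alphaSet G H P :=
  ⟨∅, ∅, @MeasurableSet.empty _ G, @MeasurableSet.empty _ H, by simp⟩

lemma alphaDep_nonneg : 0 ≤ sSup (alphaSet G H P) :=
  le_csSup (bddAbove_alphaSet G H P) (zero_mem_alphaSet G H P)

lemma le_alphaDep {A B : Set Ω} (hA : MeasurableSet[G] A) (hB : MeasurableSet[H] B) :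
    |(P (A ∩ B)).toReal - (P A).toReal * (P B).toReal| ≤ sSup (alphaSet G H P) :=
  le_csSup (bddAbove_alphaSet G H P) ⟨A, B, hA, hB, rfl⟩

/-- Finite unions of rectangles `c ∩ d`, `c ∈ M₁`, `d ∈ M₂`, with the `d`'s disjoint. -/
def rectSets : Set (Set Ω) :=
  {S | ∃ (ι : Type) (_ : Fintype ι) (c d : ι → Set Ω),
    (∀ k, MeasurableSet[M₁] (c k)) ∧ (∀ k, MeasurableSet[M₂] (d k)) ∧
    Pairwise (Function.onFun Disjoint d) ∧ S = ⋃ k, c k ∩ d k}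

lemma rectSets_measurable {S : Set Ω} (hS : S ∈ rectSets M₁ M₂) :
    MeasurableSet[M₁ ⊔ M₂] S := by
  obtain ⟨ι, _, c, d, hc, hd, -, rfl⟩ := hS
  exact MeasurableSet.iUnion fun k =>
    ((le_sup_left : M₁ ≤ M₁ ⊔ M₂) _ (hc k)).inter ((le_sup_right : M₂ ≤ M₁ ⊔ M₂) _ (hd k))

lemma mem_rectSets_left {a : Set Ω} (ha : MeasurableSet[M₁] a) : a ∈ rectSets M₁ M₂ :=
  ⟨PUnit, inferInstance, fun _ => a, fun _ => univ, fun _ => ha,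
    fun _ => MeasurableSet.univ, Subsingleton.pairwise, by simp [Set.iUnion_const]⟩

lemma mem_rectSets_right {a : Set Ω} (ha : MeasurableSet[M₂] a) : a ∈ rectSets M₁ M₂ :=
  ⟨PUnit, inferInstance, fun _ => univ, fun _ => a, fun _ => MeasurableSet.univ,
    fun _ => ha, Subsingleton.pairwise, by simp [Set.iUnion_const]⟩

lemma rectSets_inter {S T : Set Ω} (hS : S ∈ rectSets M₁ M₂) (hT : T ∈ rectSets M₁ M₂) :
    S ∩ T ∈ rectSets M₁ M₂ := by
  obtain ⟨ι, _, c, d, hc, hd, hdis, rfl⟩ := hS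
  obtain ⟨κ, _, e, f, he, hf, hfdis, rfl⟩ := hT
  refine ⟨ι × κ, inferInstance, fun p => c p.1 ∩ e p.2, fun p => d p.1 ∩ f p.2,
    fun p => (hc p.1).inter (he p.2), fun p => (hd p.1).inter (hf p.2), ?_, ?_⟩
  · intro p q hpq
    by_cases h1 : p.1 = q.1
    · have h2 : p.2 ≠ q.2 := fun hh => hpq (Prod.ext h1 hh)
      exact Disjoint.mono inf_le_right inf_le_right (hfdis h2)
    · exact Disjoint.mono inf_le_left inf_le_left (hdis h1)
  · ext x
    simp only [mem_inter_iff, mem_iUnion]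
    constructor
    · rintro ⟨⟨k, hk⟩, ⟨l, hl⟩⟩
      exact ⟨⟨k, l⟩, ⟨hk.1, hl.1⟩, hk.2, hl.2⟩
    · rintro ⟨⟨k, l⟩, ⟨h1, h2⟩, h3, h4⟩
      exact ⟨⟨k, h1, h3⟩, ⟨l, h2, h4⟩⟩

lemma rectSets_compl {S : Set Ω} (hS : S ∈ rectSets M₁ M₂) : Sᶜ ∈ rectSets M₁ M₂ := by
  obtain ⟨ι, _, c, d, hc, hd, hdis, rfl⟩ := hS
  refine ⟨Option ι, inferInstance, fun o => o.elim univ (fun k => (c k)ᶜ),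
    fun o => o.elim (⋃ k, d k)ᶜ d, ?_, ?_, ?_, ?_⟩
  · rintro (_ | k)
    · exact MeasurableSet.univ
    · exact (hc k).compl
  · rintro (_ | k)
    · exact (MeasurableSet.iUnion fun k => hd k).compl
    · exact hd k
  · rintro (_ | k) (_ | l) hkl
    · simp at hkl
    · exact Set.disjoint_left.2 fun x hx hx2 => hx (Set.mem_iUnion.2 ⟨_, hx2⟩)
    · exact Set.disjoint_right.2 fun x hx hx2 => hx (Set.mem_iUnion.2 ⟨_, hx2⟩)
    · exact hdis (fun h => hkl (congrArg _ h))
  · ext x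
    simp only [mem_compl_iff, mem_iUnion, not_exists, mem_inter_iff]
    constructor
    · intro hx
      by_cases hxd : ∃ k, x ∈ d k
      · obtain ⟨k, hk⟩ := hxd
        exact ⟨some k, fun hc' => hx k ⟨hc', hk⟩, hk⟩
      · exact ⟨none, trivial, by simpa using hxd⟩
    · rintro ⟨(_ | k), h1, h2⟩
      · intro l hl
        exact h2 (Set.mem_iUnion.2 ⟨l, hl.2⟩)
      · intro l hl
        rcases eq_or_ne k l with rfl | hne
        · exact h1 hl.1
        · exact Set.disjoint_left.1 (hdis hne) h2 hl.2

lemma isSetAlgebra_rectSets : IsSetAlgebra (rectSets M₁ M₂) where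
  empty_mem := ⟨PEmpty, inferInstance, fun k => k.elim, fun k => k.elim,
    fun k => k.elim, fun k => k.elim, Subsingleton.pairwise, by simp⟩
  compl_mem _ hs := rectSets_compl M₁ M₂ hs
  union_mem s t hs ht := by
    have : s ∪ t = (sᶜ ∩ tᶜ)ᶜ := by rw [Set.compl_inter, compl_compl, compl_compl]
    rw [this]
    exact rectSets_compl M₁ M₂ (rectSets_inter M₁ M₂
      (rectSets_compl M₁ M₂ hs) (rectSets_compl M₁ M₂ ht))

lemma generateFrom_rectSets :
    MeasurableSpace.generateFrom (rectSets M₁ M₂) = M₁ ⊔ M₂ := by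
  refine le_antisymm (MeasurableSpace.generateFrom_le fun s hs => rectSets_measurable M₁ M₂ hs)
    (sup_le ?_ ?_)
  · exact fun s hs => MeasurableSpace.measurableSet_generateFrom (mem_rectSets_left M₁ M₂ hs)
  · exact fun s hs => MeasurableSpace.measurableSet_generateFrom (mem_rectSets_right M₁ M₂ hs)

lemma rectSets_approx (h₁ : M₁ ≤ mΩ) (h₂ : M₂ ≤ mΩ) {S : Set Ω}
    (hS : MeasurableSet[M₁ ⊔ M₂] S) {ε : ℝ} (hε : 0 < ε) :
    ∃ T ∈ rectSets M₁ M₂, (P (S ∆ T)).toReal < ε := by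
  have hle : M₁ ⊔ M₂ ≤ mΩ := sup_le h₁ h₂
  haveI hfin : IsFiniteMeasure (P.trim hle) := isFiniteMeasure_trim hle
  have hdense := Measure.MeasureDense.of_generateFrom_isSetAlgebra_finite
      (m := M₁ ⊔ M₂) (μ := P.trim hle)
      (isSetAlgebra_rectSets M₁ M₂) (generateFrom_rectSets M₁ M₂).symm
  obtain ⟨T, hT, hTd⟩ := @Measure.MeasureDense.approx Ω (M₁ ⊔ M₂) (P.trim hle) _ hdense S hS
    (@measure_ne_top Ω (M₁ ⊔ M₂) (P.trim hle) hfin S) ε hε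
  have hsymm : MeasurableSet[M₁ ⊔ M₂] (S ∆ T) :=
    (hS.symmDiff (rectSets_measurable M₁ M₂ hT) : _)
  rw [trim_measurableSet_eq hle hsymm] at hTd
  refine ⟨T, hT, ?_⟩
  calc (P (S ∆ T)).toReal < (ENNReal.ofReal ε).toReal :=
        ENNReal.toReal_strict_mono (by simp) hTd
    _ = ε := ENNReal.toReal_ofReal hε.le

lemma meas_iUnion_fintype {ι : Type} [Fintype ι] {g : ι → Set Ω}
    (hdis : Pairwise (Function.onFun Disjoint g)) (hm : ∀ k, MeasurableSet (g k)) :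
    (P (⋃ k, g k)).toReal = ∑ k, (P (g k)).toReal := by
  rw [measure_iUnion hdis hm, tsum_fintype,
    ENNReal.toReal_sum (fun _ _ => measure_ne_top _ _)]

variable {P}

lemma cov_perturb {A A' B B' : Set Ω} (hA : MeasurableSet A) (hA' : MeasurableSet A')
    (hB : MeasurableSet B) (hB' : MeasurableSet B') :
    |(P (A ∩ B)).toReal - (P A).toReal * (P B).toReal|
      ≤ |(P (A' ∩ B')).toReal - (P A').toReal * (P B').toReal|
        + 2 * ((P (A ∆ A')).toReal + (P (B ∆ B')).toReal) := by
  have sub1 : (A ∩ B) ∆ (A' ∩ B') ⊆ (A ∆ A') ∪ (B ∆ B') := by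
    intro x hx
    simp only [Set.mem_symmDiff, Set.mem_union, Set.mem_inter_iff] at *
    tauto
  have e1 : |(P (A ∩ B)).toReal - (P (A' ∩ B')).toReal|
      ≤ (P (A ∆ A')).toReal + (P (B ∆ B')).toReal := by
    refine (show |(P (A ∩ B)).toReal - (P (A' ∩ B')).toReal| ≤ (P ((A ∩ B) ∆ (A' ∩ B'))).toReal
      from abs_measureReal_sub_le_measureReal_symmDiff
      ((hA.inter hB).nullMeasurableSet) ((hA'.inter hB').nullMeasurableSet)).trans ?_
    calc (P ((A ∩ B) ∆ (A' ∩ B'))).toReal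
        ≤ (P ((A ∆ A') ∪ (B ∆ B'))).toReal :=
          ENNReal.toReal_mono (measure_ne_top _ _) (measure_mono sub1)
      _ ≤ (P (A ∆ A')).toReal + (P (B ∆ B')).toReal := by
          rw [← ENNReal.toReal_add (measure_ne_top _ _) (measure_ne_top _ _)]
          exact ENNReal.toReal_mono (by simp [measure_ne_top]) (measure_union_le _ _)
  have e2 : |(P A).toReal - (P A').toReal| ≤ (P (A ∆ A')).toReal :=
    abs_measureReal_sub_le_measureReal_symmDiff hA.nullMeasurableSet hA'.nullMeasurableSet
  have e3 : |(P B).toReal - (P B').toReal| ≤ (P (B ∆ B')).toReal :=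
    abs_measureReal_sub_le_measureReal_symmDiff hB.nullMeasurableSet hB'.nullMeasurableSet
  have b1 := toReal_le_one P A
  have b2 := toReal_le_one P B
  have b3 := toReal_le_one P A'
  have b4 := toReal_le_one P B'
  have n1 : (0:ℝ) ≤ (P A).toReal := ENNReal.toReal_nonneg
  have n2 : (0:ℝ) ≤ (P B).toReal := ENNReal.toReal_nonneg
  have n3 : (0:ℝ) ≤ (P A').toReal := ENNReal.toReal_nonneg
  have n4 : (0:ℝ) ≤ (P B').toReal := ENNReal.toReal_nonneg
  rw [abs_le] at e1 e2 e3
  rw [abs_le]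
  constructor
  · rcases abs_le.1 (le_refl |(P (A' ∩ B')).toReal - (P A').toReal * (P B').toReal|) with ⟨h, -⟩
    nlinarith [e1.1, e2.1, e2.2, e3.1, e3.2]
  · rcases abs_le.1 (le_refl |(P (A' ∩ B')).toReal - (P A').toReal * (P B').toReal|) with ⟨-, h⟩
    nlinarith [e1.2, e2.1, e2.2, e3.1, e3.2]

end Stmt12Aux

namespace Stmt12Aux
open Set

lemma rect_cov_bound {Ω : Type*} (A₁ A₂ B₁ B₂ : MeasurableSpace Ω)
    {mΩ : MeasurableSpace Ω} (P : Measure Ω) [IsProbabilityMeasure P]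
    (hA₁ : A₁ ≤ mΩ) (hA₂ : A₂ ≤ mΩ) (hB₁ : B₁ ≤ mΩ) (hB₂ : B₂ ≤ mΩ)
    (h12 : Indep (A₁ ⊔ B₁) (A₂ ⊔ B₂) P) (h22 : Indep A₂ B₂ P)
    {S T : Set Ω} (hS : S ∈ rectSets A₁ A₂) (hT : T ∈ rectSets B₁ B₂) :
    |(P (S ∩ T)).toReal - (P S).toReal * (P T).toReal| ≤ sSup (alphaSet A₁ B₁ P) := by
  obtain ⟨ι, _, c, d, hc, hd, hdis, rfl⟩ := hS
  obtain ⟨κ, _, e, f, he, hf, hfdis, rfl⟩ := hT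
  have h12' := (Indep_iff _ _ _).1 h12
  have h22' := (Indep_iff _ _ _).1 h22
  have mc : ∀ k, MeasurableSet (c k) := fun k => hA₁ _ (hc k)
  have md : ∀ k, MeasurableSet (d k) := fun k => hA₂ _ (hd k)
  have me : ∀ l, MeasurableSet (e l) := fun l => hB₁ _ (he l)
  have mf : ∀ l, MeasurableSet (f l) := fun l => hB₂ _ (hf l)
  have hS' : (P (⋃ k, c k ∩ d k)).toReal = ∑ k, (P (c k)).toReal * (P (d k)).toReal := by
    rw [meas_iUnion_fintype (g := fun k => c k ∩ d k) P
      (fun k k' hkk' => ((hdis hkk').mono inf_le_right inf_le_right))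
      (fun k => (mc k).inter (md k))]
    refine Finset.sum_congr rfl fun k _ => ?_
    rw [h12' _ _ ((le_sup_left : A₁ ≤ A₁ ⊔ B₁) _ (hc k))
      ((le_sup_left : A₂ ≤ A₂ ⊔ B₂) _ (hd k)), ENNReal.toReal_mul]
  have hT' : (P (⋃ l, e l ∩ f l)).toReal = ∑ l, (P (e l)).toReal * (P (f l)).toReal := by
    rw [meas_iUnion_fintype (g := fun l => e l ∩ f l) P
      (fun l l' hll' => ((hfdis hll').mono inf_le_right inf_le_right))
      (fun l => (me l).inter (mf l))]
    refine Finset.sum_congr rfl fun l _ => ?_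
    rw [h12' _ _ ((le_sup_right : B₁ ≤ A₁ ⊔ B₁) _ (he l))
      ((le_sup_right : B₂ ≤ A₂ ⊔ B₂) _ (hf l)), ENNReal.toReal_mul]
  have hinter : (⋃ k, c k ∩ d k) ∩ (⋃ l, e l ∩ f l)
      = ⋃ p : ι × κ, (c p.1 ∩ e p.2) ∩ (d p.1 ∩ f p.2) := by
    ext x
    simp only [mem_inter_iff, mem_iUnion]
    constructor
    · rintro ⟨⟨k, hk1, hk2⟩, ⟨l, hl1, hl2⟩⟩
      exact ⟨⟨k, l⟩, ⟨hk1, hl1⟩, hk2, hl2⟩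
    · rintro ⟨⟨k, l⟩, ⟨h1, h2⟩, h3, h4⟩
      exact ⟨⟨k, h1, h3⟩, ⟨l, h2, h4⟩⟩
  have hST : (P ((⋃ k, c k ∩ d k) ∩ (⋃ l, e l ∩ f l))).toReal
      = ∑ k, ∑ l, (P (c k ∩ e l)).toReal * ((P (d k)).toReal * (P (f l)).toReal) := by
    rw [hinter, meas_iUnion_fintype P ?_ ?_]
    · rw [Fintype.sum_prod_type]
      refine Finset.sum_congr rfl fun k _ => Finset.sum_congr rfl fun l _ => ?_
      rw [h12' _ _ (((le_sup_left : A₁ ≤ A₁ ⊔ B₁) _ (hc k)).inter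
          ((le_sup_right : B₁ ≤ A₁ ⊔ B₁) _ (he l)))
        (((le_sup_left : A₂ ≤ A₂ ⊔ B₂) _ (hd k)).inter
          ((le_sup_right : B₂ ≤ A₂ ⊔ B₂) _ (hf l))),
        h22' _ _ (hd k) (hf l), ENNReal.toReal_mul, ENNReal.toReal_mul]
    · intro p q hpq
      by_cases h1 : p.1 = q.1
      · have h2 : p.2 ≠ q.2 := fun hh => hpq (Prod.ext h1 hh)
        exact ((hfdis h2).mono (inf_le_right.trans inf_le_right)
          (inf_le_right.trans inf_le_right))
      · exact ((hdis h1).mono (inf_le_right.trans inf_le_left)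
          (inf_le_right.trans inf_le_left))
    · exact fun p => ((mc p.1).inter (me p.2)).inter ((md p.1).inter (mf p.2))
  have hdsum : ∑ k, (P (d k)).toReal ≤ 1 := by
    rw [← meas_iUnion_fintype P hdis md]; exact toReal_le_one P _
  have hfsum : ∑ l, (P (f l)).toReal ≤ 1 := by
    rw [← meas_iUnion_fintype P hfdis mf]; exact toReal_le_one P _
  have hdnn : ∀ k, 0 ≤ (P (d k)).toReal := fun _ => ENNReal.toReal_nonneg
  have hfnn : ∀ l, 0 ≤ (P (f l)).toReal := fun _ => ENNReal.toReal_nonneg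
  set α := sSup (alphaSet A₁ B₁ P) with hα
  have hαnn : 0 ≤ α := alphaDep_nonneg A₁ B₁ P
  have key : (P ((⋃ k, c k ∩ d k) ∩ (⋃ l, e l ∩ f l))).toReal
      - (P (⋃ k, c k ∩ d k)).toReal * (P (⋃ l, e l ∩ f l)).toReal
      = ∑ k, ∑ l, (P (d k)).toReal * (P (f l)).toReal
        * ((P (c k ∩ e l)).toReal - (P (c k)).toReal * (P (e l)).toReal) := by
    rw [hST, hS', hT', Finset.sum_mul_sum, ← Finset.sum_sub_distrib]
    refine Finset.sum_congr rfl fun k _ => ?_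
    rw [← Finset.sum_sub_distrib]
    exact Finset.sum_congr rfl fun l _ => by ring
  rw [key]
  calc |∑ k, ∑ l, (P (d k)).toReal * (P (f l)).toReal
        * ((P (c k ∩ e l)).toReal - (P (c k)).toReal * (P (e l)).toReal)|
      ≤ ∑ k, ∑ l, (P (d k)).toReal * (P (f l)).toReal * α := by
        refine (Finset.abs_sum_le_sum_abs _ _).trans (Finset.sum_le_sum fun k _ => ?_)
        refine (Finset.abs_sum_le_sum_abs _ _).trans (Finset.sum_le_sum fun l _ => ?_)
        rw [abs_mul, abs_of_nonneg (mul_nonneg (hdnn k) (hfnn l))]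
        exact mul_le_mul_of_nonneg_left (le_alphaDep A₁ B₁ P (hc k) (he l))
          (mul_nonneg (hdnn k) (hfnn l))
    _ = (∑ k, (P (d k)).toReal) * (∑ l, (P (f l)).toReal) * α := by
        rw [Finset.sum_mul_sum]
        simp_rw [Finset.sum_mul]
    _ ≤ 1 * 1 * α := by
        refine mul_le_mul_of_nonneg_right ?_ hαnn
        exact mul_le_mul hdsum hfsum (Finset.sum_nonneg fun l _ => hfnn l) zero_le_one
    _ = α := by ring

end Stmt12Aux

open Stmt12Aux
open scoped symmDiff

/-- If `A₁ ∨ B₁` is independent of `A₂ ∨ B₂` and moreover `A₂` is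
independent of `B₂`, then `α(A₁ ∨ A₂, B₁ ∨ B₂) = α(A₁, B₁)`. -/
theorem stmt12 {Ω : Type*} [mΩ : MeasurableSpace Ω] (P : Measure Ω)
    [IsProbabilityMeasure P]
    (A₁ A₂ B₁ B₂ : MeasurableSpace Ω)
    (hA₁ : A₁ ≤ mΩ) (hA₂ : A₂ ≤ mΩ) (hB₁ : B₁ ≤ mΩ) (hB₂ : B₂ ≤ mΩ)
    (h12 : Indep (A₁ ⊔ B₁) (A₂ ⊔ B₂) P)
    (h22 : Indep A₂ B₂ P) :
    alphaDep P (A₁ ⊔ A₂) (B₁ ⊔ B₂) = alphaDep P A₁ B₁ := by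
  have hdef : ∀ G H : MeasurableSpace Ω, alphaDep P G H = sSup (alphaSet G H P) := fun _ _ => rfl
  rw [hdef, hdef]
  refine le_antisymm ?_ ?_
  · refine Real.sSup_le (fun x hx => ?_) (alphaDep_nonneg A₁ B₁ P)
    obtain ⟨A, B, hA, hB, rfl⟩ := hx
    refine le_of_forall_pos_le_add fun ε hε => ?_
    obtain ⟨A', hA', hAA'⟩ := rectSets_approx A₁ A₂ P hA₁ hA₂ hA (by positivity : (0:ℝ) < ε / 4)
    obtain ⟨B', hB', hBB'⟩ := rectSets_approx B₁ B₂ P hB₁ hB₂ hB (by positivity : (0:ℝ) < ε / 4)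
    have mA : MeasurableSet[mΩ] A := sup_le hA₁ hA₂ _ hA
    have mB : MeasurableSet[mΩ] B := sup_le hB₁ hB₂ _ hB
    have mA' : MeasurableSet[mΩ] A' := sup_le hA₁ hA₂ _ (rectSets_measurable A₁ A₂ hA')
    have mB' : MeasurableSet[mΩ] B' := sup_le hB₁ hB₂ _ (rectSets_measurable B₁ B₂ hB')
    have h1 := cov_perturb (P := P) mA mA' mB mB'
    have h2 := rect_cov_bound A₁ A₂ B₁ B₂ P hA₁ hA₂ hB₁ hB₂ h12 h22 hA' hB'
    have h3 : (P (A ∆ A')).toReal ≥ 0 := ENNReal.toReal_nonneg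
    linarith
  · refine csSup_le_csSup (bddAbove_alphaSet _ _ P) ⟨0, zero_mem_alphaSet A₁ B₁ P⟩ ?_
    rintro x ⟨A, B, hA, hB, rfl⟩
    exact ⟨A, B, (le_sup_left : A₁ ≤ A₁ ⊔ A₂) _ hA, (le_sup_left : B₁ ≤ B₁ ⊔ B₂) _ hB, rfl⟩
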